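/- Let A and B be 2×2 complex matrices such that e^A = e^B, both A and B have all eigenvalues with imaginary part strictly between -π/2 and 3π/2, and A and B are both diagonalizable. Then A = B. -/

import Mathlib

open Matrix

/-- A matrix is diagonalizable over ℂ if it is similar to a diagonal matrix. -/
def Diagonalizable (A : Matrix (Fin 2) (Fin 2) ℂ) : Prop :=
  ∃ P D : Matrix (Fin 2) (Fin 2) ℂ, IsUnit P.det ∧ D.IsDiag ∧ A = P * D * P⁻¹

/-- Injectivity of exp on the strip. -/
lemma strip_inj {a b : ℂ}
    (ha : -(Real.pi / 2) < a.im ∧ a.im < 3 * Real.pi / 2)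
    (hb : -(Real.pi / 2) < b.im ∧ b.im < 3 * Real.pi / 2)
    (h : Complex.exp a = Complex.exp b) : a = b := by
  rw [Complex.exp_eq_exp_iff_exists_int] at h
  obtain ⟨n, hn⟩ := h
  have him : a.im = b.im + n * (2 * Real.pi) := by
    rw [hn]
    simp [Complex.add_im, Complex.mul_im, Complex.mul_re]
    try ring
  have hpi := Real.pi_pos
  have : n = 0 := by
    rcases lt_trichotomy n 0 with h' | h' | h'
    · exfalso
      have : (n : ℝ) ≤ -1 := by exact_mod_cast (by omega : n ≤ -1)
      nlinarith [ha.1, ha.2, hb.1, hb.2]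
    · exact h'
    · exfalso
      have : (1 : ℝ) ≤ n := by exact_mod_cast h'
      nlinarith [ha.1, ha.2, hb.1, hb.2]
  rw [hn, this]; simp

lemma spectrum_diag (d : Fin 2 → ℂ) (i : Fin 2) :
    d i ∈ spectrum ℂ (Matrix.diagonal d) := by
  rw [spectrum.mem_iff]
  intro h
  rw [Matrix.isUnit_iff_isUnit_det] at h
  have : (algebraMap ℂ (Matrix (Fin 2) (Fin 2) ℂ)) (d i) - Matrix.diagonal d
      = Matrix.diagonal (fun j => d i - d j) := by
    rw [Matrix.algebraMap_eq_diagonal, ← Matrix.diagonal_sub]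
    rfl
  rw [this, Matrix.det_diagonal, Fin.prod_univ_two] at h
  fin_cases i <;> simp_all

lemma mem_spectrum_diag {d : Fin 2 → ℂ} {z : ℂ}
    (h : z ∈ spectrum ℂ (Matrix.diagonal d)) : z = d 0 ∨ z = d 1 := by
  rw [spectrum.mem_iff] at h
  by_contra hc
  push_neg at hc
  apply h
  rw [Matrix.isUnit_iff_isUnit_det]
  have : (algebraMap ℂ (Matrix (Fin 2) (Fin 2) ℂ)) z - Matrix.diagonal d
      = Matrix.diagonal (fun j => z - d j) := by
    rw [Matrix.algebraMap_eq_diagonal, ← Matrix.diagonal_sub]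
    rfl
  rw [this, Matrix.det_diagonal, Fin.prod_univ_two]
  exact (IsUnit.mul (by simpa [sub_eq_zero] using hc.1) (by simpa [sub_eq_zero] using hc.2))

lemma spectrum_conj {P M : Matrix (Fin 2) (Fin 2) ℂ} (hP : IsUnit P.det) :
    spectrum ℂ (P * M * P⁻¹) = spectrum ℂ M := by
  obtain ⟨u, hu⟩ := (Matrix.isUnit_iff_isUnit_det P).mpr hP
  rw [← hu, ← Matrix.coe_units_inv]
  exact spectrum.units_conjugate

lemma diag_affine (a b : ℂ) (f : Fin 2 → ℂ) :
    a • (1 : Matrix (Fin 2) (Fin 2) ℂ) + b • Matrix.diagonal f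
      = Matrix.diagonal (fun i => a + b * f i) := by
  ext i j
  by_cases h : i = j <;> simp [Matrix.diagonal_apply, Matrix.one_apply, h]

theorem log_unique_diagonalizable (A B : Matrix (Fin 2) (Fin 2) ℂ)
    (hexp : NormedSpace.exp A = NormedSpace.exp B)
    (hA : ∀ z ∈ spectrum ℂ A, -(Real.pi / 2) < z.im ∧ z.im < 3 * Real.pi / 2)
    (hB : ∀ z ∈ spectrum ℂ B, -(Real.pi / 2) < z.im ∧ z.im < 3 * Real.pi / 2)
    (hdA : Diagonalizable A) (hdB : Diagonalizable B) : A = B := by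
  obtain ⟨P, D, hP, hDd, hAeq⟩ := hdA
  obtain ⟨Q, E, hQ, hEd, hBeq⟩ := hdB
  set d : Fin 2 → ℂ := fun i => D i i with hd
  set e : Fin 2 → ℂ := fun i => E i i with he
  have hD : D = Matrix.diagonal d := (hDd.diagonal_diag).symm
  have hE : E = Matrix.diagonal e := (hEd.diagonal_diag).symm
  have hPu : IsUnit P := (Matrix.isUnit_iff_isUnit_det P).mpr hP
  have hQu : IsUnit Q := (Matrix.isUnit_iff_isUnit_det Q).mpr hQ
  have hspecA : spectrum ℂ A = spectrum ℂ (Matrix.diagonal d) := by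
    rw [hAeq, hD, spectrum_conj hP]
  have hspecB : spectrum ℂ B = spectrum ℂ (Matrix.diagonal e) := by
    rw [hBeq, hE, spectrum_conj hQ]
  have hdstrip : ∀ i, -(Real.pi / 2) < (d i).im ∧ (d i).im < 3 * Real.pi / 2 := fun i =>
    hA _ (hspecA ▸ spectrum_diag d i)
  have hestrip : ∀ i, -(Real.pi / 2) < (e i).im ∧ (e i).im < 3 * Real.pi / 2 := fun i =>
    hB _ (hspecB ▸ spectrum_diag e i)
  -- exp computations
  have hdiagexp : ∀ f : Fin 2 → ℂ,
      NormedSpace.exp (Matrix.diagonal f) = Matrix.diagonal (fun i => Complex.exp (f i)) := by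
    intro f
    rw [Matrix.exp_diagonal, Pi.exp_def]
    funext i
    rw [← Complex.exp_eq_exp_ℂ]
  have hexpA : NormedSpace.exp A = P * Matrix.diagonal (fun i => Complex.exp (d i)) * P⁻¹ := by
    rw [hAeq, hD, Matrix.exp_conj P _ hPu, hdiagexp]
  have hexpB : NormedSpace.exp B = Q * Matrix.diagonal (fun i => Complex.exp (e i)) * Q⁻¹ := by
    rw [hBeq, hE, Matrix.exp_conj Q _ hQu, hdiagexp]
  -- eigenvalues of exp B are among exp of eigenvalues of A
  have hmem : ∀ i, Complex.exp (e i) = Complex.exp (d 0) ∨ Complex.exp (e i) = Complex.exp (d 1) := by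
    intro i
    have h1 : Complex.exp (e i) ∈ spectrum ℂ (NormedSpace.exp B) := by
      rw [hexpB, spectrum_conj hQ]
      exact spectrum_diag _ i
    rw [← hexp, hexpA, spectrum_conj hP] at h1
    exact mem_spectrum_diag h1
  have hei : ∀ i, e i = d 0 ∨ e i = d 1 := by
    intro i
    rcases hmem i with h | h
    · exact Or.inl (strip_inj (hestrip i) (hdstrip 0) h)
    · exact Or.inr (strip_inj (hestrip i) (hdstrip 1) h)
  by_cases hcase : d 0 = d 1
  · -- A is scalar
    have hDscalar : Matrix.diagonal d = d 0 • (1 : Matrix (Fin 2) (Fin 2) ℂ) := by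
      ext i j
      fin_cases i <;> fin_cases j <;>
        simp [Matrix.diagonal_apply, Matrix.one_apply, hcase]
    have hAscalar : A = d 0 • 1 := by
      rw [hAeq, hD, hDscalar, Matrix.mul_smul, Matrix.smul_mul, Matrix.mul_one,
        Matrix.mul_nonsing_inv P hP]
    have hEscalar : Matrix.diagonal e = d 0 • (1 : Matrix (Fin 2) (Fin 2) ℂ) := by
      ext i j
      fin_cases i <;> fin_cases j <;>
        rcases hei 0 with h0 | h0 <;> rcases hei 1 with h1 | h1 <;>
        simp [Matrix.diagonal_apply, Matrix.one_apply, h0, h1, hcase]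
    have hBscalar : B = d 0 • 1 := by
      rw [hBeq, hE, hEscalar, Matrix.mul_smul, Matrix.smul_mul, Matrix.mul_one,
        Matrix.mul_nonsing_inv Q hQ]
    rw [hAscalar, hBscalar]
  · -- distinct eigenvalues: affine recovery
    have hexpne : Complex.exp (d 0) ≠ Complex.exp (d 1) := fun h =>
      hcase (strip_inj (hdstrip 0) (hdstrip 1) h)
    set b : ℂ := (d 1 - d 0) / (Complex.exp (d 1) - Complex.exp (d 0)) with hb
    set a : ℂ := d 0 - b * Complex.exp (d 0) with ha
    have key : ∀ z : ℂ, z = d 0 ∨ z = d 1 → a + b * Complex.exp z = z := by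
      intro z hz
      have hden : Complex.exp (d 1) - Complex.exp (d 0) ≠ 0 := sub_ne_zero.mpr hexpne.symm
      rcases hz with rfl | rfl
      · rw [ha]; ring
      · rw [ha, hb]
        field_simp
        ring
    have hDaff : Matrix.diagonal d
        = a • (1 : Matrix (Fin 2) (Fin 2) ℂ)
          + b • Matrix.diagonal (fun i => Complex.exp (d i)) := by
      have hfd : (fun i => a + b * Complex.exp (d i)) = d :=
        funext fun i => key (d i) (by fin_cases i <;> simp)
      rw [diag_affine, hfd]
    have hEaff : Matrix.diagonal e
        = a • (1 : Matrix (Fin 2) (Fin 2) ℂ)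
          + b • Matrix.diagonal (fun i => Complex.exp (e i)) := by
      have hfe : (fun i => a + b * Complex.exp (e i)) = e :=
        funext fun i => key (e i) (hei i)
      rw [diag_affine, hfe]
    have hconj : ∀ (R : Matrix (Fin 2) (Fin 2) ℂ) (hR : IsUnit R.det)
        (M : Matrix (Fin 2) (Fin 2) ℂ),
        R * (a • 1 + b • M) * R⁻¹ = a • 1 + b • (R * M * R⁻¹) := by
      intro R hR M
      rw [Matrix.mul_add, Matrix.add_mul, Matrix.mul_smul, Matrix.smul_mul,
        Matrix.mul_smul, Matrix.smul_mul, Matrix.mul_one,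
        Matrix.mul_nonsing_inv R hR]
    have hAval : A = a • 1 + b • NormedSpace.exp A := by
      conv_lhs => rw [hAeq, hD, hDaff]
      rw [hconj P hP, ← hexpA]
    have hBval : B = a • 1 + b • NormedSpace.exp B := by
      conv_lhs => rw [hBeq, hE, hEaff]
      rw [hconj Q hQ, ← hexpB]
    rw [hAval, hBval, hexp]
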